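/- Let ε ∈ (0,1] and (ρ,u) ∈ H¹(0,1) × H¹₀(0,1) with ρ > 0 and ∫₀¹ ρ = 1. Define K(ρ,u) = (1/2)‖u_x‖²_{L²} + (1/(2ε²))‖(log ρ)_x‖²_{L²} and E(ρ,u) = ∫₀¹((1/2)ρu² + (1/ε²)(ρ log ρ − ρ + 1) + (1/2)ρ_x u/ρ + (1/4)ρ_x²/ρ³)dx. Then E(ρ,u) ≤ (3/2 + 2‖ρ‖²_{L∞} + ε²‖ρ^{-1}‖_{L∞})·K(ρ,u). -/

import Mathlib

open MeasureTheory

/-- Cauchy–Schwarz for interval integrals: `(∫ f)² ≤ (b-a) ∫ f² ≤ ∫ f²` when `b - a ≤ 1`. -/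
lemma cs_sq_integral {f : ℝ → ℝ} {a b : ℝ} (hab : a ≤ b) (hb1 : b - a ≤ 1)
    (hf : IntervalIntegrable f volume a b)
    (hf2 : IntervalIntegrable (fun x => (f x)^2) volume a b) :
    (∫ x in a..b, f x)^2 ≤ ∫ x in a..b, (f x)^2 := by
  set L := b - a with hL
  set I := ∫ x in a..b, f x with hI
  set J := ∫ x in a..b, (f x)^2 with hJdef
  have hJ0 : 0 ≤ J := intervalIntegral.integral_nonneg hab (fun x _ => sq_nonneg _)
  rcases eq_or_lt_of_le hab with h | h
  · have : I = 0 := by rw [hI, ← h, intervalIntegral.integral_same]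
    simpa [this] using hJ0
  · have hL0 : 0 < L := by simp only [hL]; linarith
    have key : 0 ≤ ∫ x in a..b, (L * f x - I)^2 :=
      intervalIntegral.integral_nonneg hab (fun x _ => sq_nonneg _)
    have expand : (∫ x in a..b, (L * f x - I)^2)
        = L^2 * J - 2*L*I*I + I^2 * L := by
      have heq : (fun x => (L * f x - I)^2)
          = fun x => L^2 * (f x)^2 - (2*L*I) * f x + I^2 := by
        funext x; ring
      rw [heq, intervalIntegral.integral_add ((hf2.const_mul _).sub (hf.const_mul _))
          intervalIntegrable_const,
        intervalIntegral.integral_sub (hf2.const_mul _) (hf.const_mul _),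
        intervalIntegral.integral_const_mul, intervalIntegral.integral_const_mul,
        intervalIntegral.integral_const]
      simp only [← hI, ← hJdef, smul_eq_mul, ← hL]
      ring
    have h1 : L * I^2 ≤ L * (L * J) := by nlinarith [key, expand]
    have h2 : I^2 ≤ L * J := le_of_mul_le_mul_left h1 hL0
    nlinarith [h2, hJ0, hb1, hL0]

/-- C-S on a subinterval of `[0,1]`, bounded by the full integral of the square. -/
lemma cs_sub {f : ℝ → ℝ} (hf : ContinuousOn f (Set.Icc 0 1)) {c d : ℝ}
    (hc : 0 ≤ c) (hcd : c ≤ d) (hd : d ≤ 1) :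
    (∫ x in c..d, f x)^2 ≤ ∫ x in (0:ℝ)..1, (f x)^2 := by
  have hsub : Set.Icc c d ⊆ Set.Icc 0 1 := Set.Icc_subset_Icc hc hd
  have h1 : IntervalIntegrable f volume c d :=
    ContinuousOn.intervalIntegrable (by rw [Set.uIcc_of_le hcd]; exact hf.mono hsub)
  have h2 : IntervalIntegrable (fun x => (f x)^2) volume c d :=
    ContinuousOn.intervalIntegrable (by rw [Set.uIcc_of_le hcd]; exact (hf.mono hsub).pow 2)
  have h2' : IntervalIntegrable (fun x => (f x)^2) volume 0 1 :=
    ContinuousOn.intervalIntegrable (by rw [Set.uIcc_of_le (by norm_num : (0:ℝ) ≤ 1)]; exact hf.pow 2)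
  calc (∫ x in c..d, f x)^2 ≤ ∫ x in c..d, (f x)^2 :=
        cs_sq_integral hcd (by linarith) h1 h2
    _ ≤ ∫ x in (0:ℝ)..1, (f x)^2 :=
        intervalIntegral.integral_mono_interval hc hcd hd
          (Filter.Eventually.of_forall fun x => sq_nonneg _) h2'

/-- pointwise energy estimate -/
lemma ptwise (e r p v : ℝ) (he : 0 < e) (hr : 0 < r) :
    1/2*r*v^2 + (r*Real.log r - r + 1)/e^2 + 1/2*p*v/r + 1/4*p^2/r^3
      ≤ 3/4*(r*v^2) + (r-1)^2/e^2 + 1/2*(p^2/r^3) := by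
  have hlog : Real.log r ≤ r - 1 := Real.log_le_sub_one_of_pos hr
  have he2 : (0:ℝ) < e^2 := by positivity
  have hr3 : (0:ℝ) < r^3 := by positivity
  have hnum : r*Real.log r - r + 1 ≤ (r-1)^2 := by
    nlinarith [mul_le_mul_of_nonneg_left hlog hr.le]
  have h1 : (r*Real.log r - r + 1)/e^2 ≤ (r-1)^2/e^2 := by gcongr
  have h2 : 1/2*p*v/r ≤ 1/4*(r*v^2) + 1/4*(p^2/r^3) := by
    rw [← sub_nonneg]
    have h3 : 1/4*(r*v^2) + 1/4*(p^2/r^3) - 1/2*p*v/r = (r^2*v - p)^2/(4*r^3) := by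
      field_simp; ring
    rw [h3]; positivity
  have e1 : 1/4*p^2/r^3 = 1/4*(p^2/r^3) := by ring
  rw [e1]; linarith

theorem stmt_19 (ε : ℝ) (hε : ε ∈ Set.Ioc (0:ℝ) 1)
    (ρ ρ' u u' : ℝ → ℝ)
    (hρ : ∀ x, HasDerivAt ρ (ρ' x) x)
    (hu : ∀ x, HasDerivAt u (u' x) x)
    (hρ' : ContinuousOn ρ' (Set.Icc 0 1))
    (hu' : ContinuousOn u' (Set.Icc 0 1))
    (hpos : ∀ x ∈ Set.Icc (0:ℝ) 1, 0 < ρ x)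
    (hmass : (∫ x in (0:ℝ)..1, ρ x) = 1)
    (hu0 : u 0 = 0) (hu1 : u 1 = 0) :
    (∫ x in (0:ℝ)..1,
        (1/2 * ρ x * (u x)^2 + (ρ x * Real.log (ρ x) - ρ x + 1) / ε^2 +
          1/2 * ρ' x * u x / ρ x + 1/4 * (ρ' x)^2 / (ρ x)^3)) ≤
      (3/2 + 2 * (sSup ((fun x => ρ x) '' Set.Icc (0:ℝ) 1))^2 +
          ε^2 * sSup ((fun x => (ρ x)⁻¹) '' Set.Icc (0:ℝ) 1)) *
        (1/2 * (∫ x in (0:ℝ)..1, (u' x)^2) +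
          1/(2*ε^2) * ∫ x in (0:ℝ)..1, (ρ' x / ρ x)^2) := by
  obtain ⟨hε0, hε1⟩ := hε
  have hε2 : (0:ℝ) < ε^2 := by positivity
  have h01 : (0:ℝ) ≤ 1 := by norm_num
  have huIcc : Set.uIcc (0:ℝ) 1 = Set.Icc 0 1 := Set.uIcc_of_le h01
  have hρc : Continuous ρ := continuous_iff_continuousAt.mpr fun x => (hρ x).continuousAt
  have huc : Continuous u := continuous_iff_continuousAt.mpr fun x => (hu x).continuousAt
  have hne : ∀ x ∈ Set.Icc (0:ℝ) 1, ρ x ≠ 0 := fun x hx => (hpos x hx).ne'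
  have h0mem : (0:ℝ) ∈ Set.Icc (0:ℝ) 1 := by norm_num
  -- sup bounds
  set M := sSup ((fun x => ρ x) '' Set.Icc (0:ℝ) 1) with hMdef
  set m := sSup ((fun x => (ρ x)⁻¹) '' Set.Icc (0:ℝ) 1) with hmdef
  have hbddM : BddAbove ((fun x => ρ x) '' Set.Icc (0:ℝ) 1) :=
    (isCompact_Icc.image_of_continuousOn hρc.continuousOn).bddAbove
  have hMle : ∀ x ∈ Set.Icc (0:ℝ) 1, ρ x ≤ M := fun x hx => le_csSup hbddM ⟨x, hx, rfl⟩
  have hM0 : 0 ≤ M := le_trans (hpos 0 h0mem).le (hMle 0 h0mem)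
  have hinvc : ContinuousOn (fun x => (ρ x)⁻¹) (Set.Icc (0:ℝ) 1) :=
    hρc.continuousOn.inv₀ hne
  have hbddm : BddAbove ((fun x => (ρ x)⁻¹) '' Set.Icc (0:ℝ) 1) :=
    (isCompact_Icc.image_of_continuousOn hinvc).bddAbove
  have hmle : ∀ x ∈ Set.Icc (0:ℝ) 1, (ρ x)⁻¹ ≤ m := fun x hx => le_csSup hbddm ⟨x, hx, rfl⟩
  have hm0 : 0 ≤ m := le_trans (inv_pos.mpr (hpos 0 h0mem)).le (hmle 0 h0mem)
  set K1 := ∫ x in (0:ℝ)..1, (u' x)^2 with hK1def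
  set K2 := ∫ x in (0:ℝ)..1, (ρ' x / ρ x)^2 with hK2def
  have hK1 : 0 ≤ K1 := intervalIntegral.integral_nonneg h01 (fun x _ => sq_nonneg _)
  have hK2 : 0 ≤ K2 := intervalIntegral.integral_nonneg h01 (fun x _ => sq_nonneg _)
  -- sup-norm bound on u
  have hu_bd : ∀ x ∈ Set.Icc (0:ℝ) 1, (u x)^2 ≤ K1 := by
    intro x hx
    have ftc : (∫ t in (0:ℝ)..x, u' t) = u x - u 0 :=
      intervalIntegral.integral_eq_sub_of_hasDerivAt (fun t _ => hu t)
        (ContinuousOn.intervalIntegrable (by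
          rw [Set.uIcc_of_le hx.1]; exact hu'.mono (Set.Icc_subset_Icc le_rfl hx.2)))
    have h := cs_sub hu' le_rfl hx.1 hx.2
    rw [ftc, hu0, sub_zero] at h
    exact h
  -- a point where ρ = 1
  obtain ⟨a, haI, hamin⟩ := isCompact_Icc.exists_isMinOn (Set.nonempty_Icc.2 h01)
    hρc.continuousOn
  obtain ⟨b, hbI, hbmax⟩ := isCompact_Icc.exists_isMaxOn (Set.nonempty_Icc.2 h01)
    hρc.continuousOn
  have hρint : IntervalIntegrable ρ volume 0 1 :=
    hρc.intervalIntegrable 0 1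
  have hρa : ρ a ≤ 1 := by
    have : (∫ x in (0:ℝ)..1, ρ a) ≤ ∫ x in (0:ℝ)..1, ρ x :=
      intervalIntegral.integral_mono_on h01 intervalIntegrable_const hρint
        (fun x hx => hamin hx)
    simpa [hmass] using this
  have hρb : 1 ≤ ρ b := by
    have : (∫ x in (0:ℝ)..1, ρ x) ≤ ∫ x in (0:ℝ)..1, ρ b :=
      intervalIntegral.integral_mono_on h01 hρint intervalIntegrable_const
        (fun x hx => hbmax hx)
    simpa [hmass] using this
  obtain ⟨x₀, hx₀u, hx₀⟩ : ∃ x₀ ∈ Set.uIcc a b, ρ x₀ = 1 :=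
    intermediate_value_uIcc (hρc.continuousOn.mono (Set.uIcc_subset_Icc haI hbI))
      (Set.mem_uIcc.mpr (Or.inl ⟨hρa, hρb⟩))
  have hx₀I : x₀ ∈ Set.Icc (0:ℝ) 1 := Set.uIcc_subset_Icc haI hbI hx₀u
  -- bound on (ρ x - 1)²
  have hρ_bd : ∀ x ∈ Set.Icc (0:ℝ) 1, (ρ x - 1)^2 ≤ ∫ t in (0:ℝ)..1, (ρ' t)^2 := by
    intro x hx
    rcases le_total x₀ x with hcd | hcd
    · have ftc : (∫ t in x₀..x, ρ' t) = ρ x - ρ x₀ :=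
        intervalIntegral.integral_eq_sub_of_hasDerivAt (fun t _ => hρ t)
          (ContinuousOn.intervalIntegrable (by
            rw [Set.uIcc_of_le hcd]; exact hρ'.mono (Set.Icc_subset_Icc hx₀I.1 hx.2)))
      have h := cs_sub hρ' hx₀I.1 hcd hx.2
      rw [ftc, hx₀] at h
      exact h
    · have ftc : (∫ t in x..x₀, ρ' t) = ρ x₀ - ρ x :=
        intervalIntegral.integral_eq_sub_of_hasDerivAt (fun t _ => hρ t)
          (ContinuousOn.intervalIntegrable (by
            rw [Set.uIcc_of_le hcd]; exact hρ'.mono (Set.Icc_subset_Icc hx.1 hx₀I.2)))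
      have h := cs_sub hρ' hx.1 hcd hx₀I.2
      rw [ftc, hx₀] at h
      calc (ρ x - 1)^2 = (1 - ρ x)^2 := by ring
        _ ≤ _ := h
  -- integrability
  have hρ3ne : ∀ x ∈ Set.Icc (0:ℝ) 1, (ρ x)^3 ≠ 0 := fun x hx => pow_ne_zero 3 (hne x hx)
  have hIA : IntervalIntegrable (fun x => ρ x * (u x)^2) volume 0 1 :=
    (hρc.mul (huc.pow 2)).intervalIntegrable 0 1
  have hIB : IntervalIntegrable (fun x => (ρ x - 1)^2/ε^2) volume 0 1 :=
    (((hρc.sub continuous_const).pow 2).div_const _).intervalIntegrable 0 1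
  have hIC : IntervalIntegrable (fun x => (ρ' x)^2/(ρ x)^3) volume 0 1 :=
    ContinuousOn.intervalIntegrable (by
      rw [huIcc]; exact (hρ'.pow 2).div (hρc.continuousOn.pow 3) hρ3ne)
  have hIρ'2 : IntervalIntegrable (fun x => (ρ' x)^2) volume 0 1 :=
    ContinuousOn.intervalIntegrable (by rw [huIcc]; exact hρ'.pow 2)
  have hIK2 : IntervalIntegrable (fun x => (ρ' x / ρ x)^2) volume 0 1 :=
    ContinuousOn.intervalIntegrable (by
      rw [huIcc]; exact (hρ'.div hρc.continuousOn hne).pow 2)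
  have hlogc : ContinuousOn (fun x => Real.log (ρ x)) (Set.Icc (0:ℝ) 1) :=
    hρc.continuousOn.log hne
  have hILHS : IntervalIntegrable (fun x =>
      1/2 * ρ x * (u x)^2 + (ρ x * Real.log (ρ x) - ρ x + 1) / ε^2 +
        1/2 * ρ' x * u x / ρ x + 1/4 * (ρ' x)^2 / (ρ x)^3) volume 0 1 := by
    apply ContinuousOn.intervalIntegrable
    rw [huIcc]
    have c1 : ContinuousOn (fun x => 1/2 * ρ x * (u x)^2) (Set.Icc (0:ℝ) 1) :=
      (continuousOn_const.mul hρc.continuousOn).mul (huc.continuousOn.pow 2)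
    have c2 : ContinuousOn (fun x => (ρ x * Real.log (ρ x) - ρ x + 1) / ε^2)
        (Set.Icc (0:ℝ) 1) :=
      (((hρc.continuousOn.mul hlogc).sub hρc.continuousOn).add
        continuousOn_const).div_const _
    have c3 : ContinuousOn (fun x => 1/2 * ρ' x * u x / ρ x) (Set.Icc (0:ℝ) 1) :=
      ((continuousOn_const.mul hρ').mul huc.continuousOn).div hρc.continuousOn hne
    have c4 : ContinuousOn (fun x => 1/4 * (ρ' x)^2 / (ρ x)^3) (Set.Icc (0:ℝ) 1) :=
      (continuousOn_const.mul (hρ'.pow 2)).div (hρc.continuousOn.pow 3) hρ3ne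
    exact ((c1.add c2).add c3).add c4
  have hImid : IntervalIntegrable (fun x =>
      3/4 * (ρ x * (u x)^2) + (ρ x - 1)^2/ε^2 + 1/2 * ((ρ' x)^2/(ρ x)^3)) volume 0 1 :=
    ((hIA.const_mul _).add hIB).add (hIC.const_mul _)
  -- step 1: pointwise estimate
  have step1 : (∫ x in (0:ℝ)..1,
        (1/2 * ρ x * (u x)^2 + (ρ x * Real.log (ρ x) - ρ x + 1) / ε^2 +
          1/2 * ρ' x * u x / ρ x + 1/4 * (ρ' x)^2 / (ρ x)^3)) ≤
      ∫ x in (0:ℝ)..1,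
        (3/4 * (ρ x * (u x)^2) + (ρ x - 1)^2/ε^2 + 1/2 * ((ρ' x)^2/(ρ x)^3)) :=
    intervalIntegral.integral_mono_on h01 hILHS hImid
      (fun x hx => ptwise ε (ρ x) (ρ' x) (u x) hε0 (hpos x hx))
  set A := ∫ x in (0:ℝ)..1, ρ x * (u x)^2 with hAdef
  set B := ∫ x in (0:ℝ)..1, (ρ x - 1)^2 with hBdef
  set C := ∫ x in (0:ℝ)..1, (ρ' x)^2/(ρ x)^3 with hCdef
  have split : (∫ x in (0:ℝ)..1,
        (3/4 * (ρ x * (u x)^2) + (ρ x - 1)^2/ε^2 + 1/2 * ((ρ' x)^2/(ρ x)^3)))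
      = 3/4 * A + B/ε^2 + 1/2 * C := by
    rw [intervalIntegral.integral_add ((hIA.const_mul _).add hIB) (hIC.const_mul _),
      intervalIntegral.integral_add (hIA.const_mul _) hIB,
      intervalIntegral.integral_const_mul, intervalIntegral.integral_const_mul,
      intervalIntegral.integral_div]
  -- A ≤ K1
  have hA : A ≤ K1 := by
    have h1 : A ≤ ∫ x in (0:ℝ)..1, K1 * ρ x := by
      apply intervalIntegral.integral_mono_on h01 hIA (hρint.const_mul K1)
      intro x hx
      calc ρ x * (u x)^2 ≤ ρ x * K1 :=
            mul_le_mul_of_nonneg_left (hu_bd x hx) (hpos x hx).le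
        _ = K1 * ρ x := mul_comm _ _
    rwa [intervalIntegral.integral_const_mul, hmass, mul_one] at h1
  -- B ≤ M² K2
  have hB : B ≤ M^2 * K2 := by
    have h1 : B ≤ ∫ x in (0:ℝ)..1, (ρ' x)^2 := by
      have h2 : B ≤ ∫ x in (0:ℝ)..1, (∫ t in (0:ℝ)..1, (ρ' t)^2) :=
        intervalIntegral.integral_mono_on h01
          (((hρc.sub continuous_const).pow 2).intervalIntegrable 0 1)
          intervalIntegrable_const hρ_bd
      simpa using h2
    have h3 : (∫ x in (0:ℝ)..1, (ρ' x)^2) ≤ ∫ x in (0:ℝ)..1, M^2 * (ρ' x / ρ x)^2 := by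
      apply intervalIntegral.integral_mono_on h01 hIρ'2 (hIK2.const_mul _)
      intro x hx
      have e : (ρ' x)^2 = (ρ x)^2 * (ρ' x / ρ x)^2 := by
        field_simp [hne x hx]
      rw [e]
      exact mul_le_mul_of_nonneg_right
        (pow_le_pow_left₀ (hpos x hx).le (hMle x hx) 2) (sq_nonneg _)
    rw [intervalIntegral.integral_const_mul] at h3
    linarith
  -- C ≤ m K2
  have hC : C ≤ m * K2 := by
    have h1 : C ≤ ∫ x in (0:ℝ)..1, m * (ρ' x / ρ x)^2 := by
      apply intervalIntegral.integral_mono_on h01 hIC (hIK2.const_mul _)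
      intro x hx
      have e : (ρ' x)^2/(ρ x)^3 = (ρ x)⁻¹ * (ρ' x / ρ x)^2 := by
        rw [div_pow]
        field_simp [hne x hx]
      rw [e]
      exact mul_le_mul_of_nonneg_right (hmle x hx) (sq_nonneg _)
    rwa [intervalIntegral.integral_const_mul] at h1
  have hBdiv : B/ε^2 ≤ (M^2/ε^2) * K2 := by
    have e : (M^2/ε^2) * K2 = (M^2 * K2)/ε^2 := by ring
    rw [e]
    gcongr
  have hRHSexp : (3/2 + 2*M^2 + ε^2*m) * (1/2*K1 + 1/(2*ε^2)*K2)
      = 3/4*K1 + M^2*K1 + ε^2*m*K1/2 + (3/(4*ε^2))*K2 + (M^2/ε^2)*K2 + m*K2/2 := by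
    field_simp
    ring
  have hn1 : 0 ≤ M^2*K1 := by positivity
  have hn2 : 0 ≤ ε^2*m*K1/2 := by positivity
  have hn3 : 0 ≤ (3/(4*ε^2))*K2 := by positivity
  linarith [step1, split, hA, hB, hC, hBdiv, hn1, hn2, hn3, hRHSexp]
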